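/- Let n ≥ 3 and let q be a prime power with q ≤ n − 2. Then the Catalan matroid C_n is not representable over the finite field 𝔽_q with q elements. -/
import Mathlib


/-- Height of the path with up-step set `A` after `x` steps: `2·|A ∩ {1,…,x}| − x`. -/
def ht (A : Finset ℕ) (x : ℕ) : ℤ := 2 * (A ∩ Finset.Icc 1 x).card - x

/-- `P` is the up-step set of a Dyck path of length `2n`. -/
def IsDyck (n : ℕ) (P : Finset ℕ) : Prop :=
  P ⊆ Finset.Icc 1 (2 * n) ∧ P.card = n ∧ ∀ x ≤ 2 * n, 0 ≤ ht P x

open Finset Submodule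

lemma isDyck_aux (n a b : ℕ) (hn : 3 ≤ n) (ha : n - 1 ≤ a) (hab : a < b) (hb : b ≤ 2*n - 2) :
    IsDyck n (insert a (insert b (Finset.Icc 1 (n-2)))) := by
  have hbC : b ∉ Finset.Icc 1 (n-2) := by simp only [Finset.mem_Icc]; omega
  refine ⟨?_, ?_, ?_⟩
  · intro x hx
    simp only [Finset.mem_insert, Finset.mem_Icc] at hx ⊢
    omega
  · rw [Finset.card_insert_of_notMem (by simp only [Finset.mem_insert, Finset.mem_Icc]; omega),
      Finset.card_insert_of_notMem hbC, Nat.card_Icc]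
    omega
  · intro x hx
    unfold ht
    have hCx : Finset.Icc 1 (n-2) ∩ Finset.Icc 1 x = Finset.Icc 1 (min (n-2) x) := by
      ext m; simp only [Finset.mem_inter, Finset.mem_Icc]; omega
    have hcard : ((insert a (insert b (Finset.Icc 1 (n-2)))) ∩ Finset.Icc 1 x).card
        = (if a ≤ x then 1 else 0) + (if b ≤ x then 1 else 0) + min (n-2) x := by
      rcases le_or_gt b x with hbx | hbx
      · have hax : a ≤ x := le_of_lt (lt_of_lt_of_le hab hbx)
        rw [Finset.insert_inter_of_mem (by simp only [Finset.mem_Icc]; omega),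
          Finset.insert_inter_of_mem (by simp only [Finset.mem_Icc]; omega),
          Finset.card_insert_of_notMem
            (by simp only [Finset.mem_insert, Finset.mem_inter, Finset.mem_Icc]; omega),
          Finset.card_insert_of_notMem
            (by simp only [Finset.mem_inter, Finset.mem_Icc]; omega),
          hCx, Nat.card_Icc]
        simp only [if_pos hax, if_pos hbx]
        omega
      · rcases le_or_gt a x with hax | hax
        · rw [Finset.insert_inter_of_mem (by simp only [Finset.mem_Icc]; omega),
            Finset.insert_inter_of_notMem (by simp only [Finset.mem_Icc]; omega),
            Finset.card_insert_of_notMem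
              (by simp only [Finset.mem_inter, Finset.mem_Icc]; omega),
            hCx, Nat.card_Icc]
          simp only [if_pos hax, if_neg (by omega : ¬ b ≤ x)]
          omega
        · rw [Finset.insert_inter_of_notMem (by simp only [Finset.mem_Icc]; omega),
            Finset.insert_inter_of_notMem (by simp only [Finset.mem_Icc]; omega),
            hCx, Nat.card_Icc]
          simp only [if_neg (by omega : ¬ a ≤ x), if_neg (by omega : ¬ b ≤ x)]
          omega
    rw [hcard]
    split_ifs <;> push_cast <;> omega

lemma mem_span_image_finset {K V : Type} [Field K] [AddCommGroup V] [Module K V] (v : ℕ → V)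
    (C : Finset ℕ) {x : V} (hx : x ∈ Submodule.span K (v '' (C : Set ℕ))) :
    ∃ g : ℕ → K, ∑ m ∈ C, g m • v m = x := by
  induction hx using Submodule.span_induction with
  | mem y hy =>
    obtain ⟨m, hm, rfl⟩ := hy
    refine ⟨fun k => if k = m then 1 else 0, ?_⟩
    have hm' : m ∈ C := hm
    rw [Finset.sum_eq_single m]
    · simp
    · intro k hk hkm; simp [hkm]
    · intro hmc; exact absurd hm' hmc
  | zero => exact ⟨0, by simp⟩
  | add y z hy hz ihy ihz =>
    obtain ⟨g, rfl⟩ := ihy; obtain ⟨g', rfl⟩ := ihz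
    exact ⟨g + g', by simp [add_smul, Finset.sum_add_distrib]⟩
  | smul c y hy ihy =>
    obtain ⟨g, rfl⟩ := ihy
    exact ⟨c • g, by simp [Finset.smul_sum, smul_smul]⟩

lemma pair_quot {K V Q : Type} [Field K] [AddCommGroup V] [Module K V]
    [AddCommGroup Q] [Module K Q]
    (v : ℕ → V) (C : Finset ℕ) (a b : ℕ) (ha : a ∉ C) (hb : b ∉ C) (hab : a ≠ b)
    (h : LinearIndependent K (fun x : (insert a (insert b C) : Finset ℕ) => v x.1))
    (π : V →ₗ[K] Q) (hker : ∀ x, π x = 0 → x ∈ Submodule.span K (v '' (C : Set ℕ)))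
    (c₁ c₂ : K) (hrel : c₁ • π (v a) + c₂ • π (v b) = 0) : c₁ = 0 ∧ c₂ = 0 := by
  have hmem : c₁ • v a + c₂ • v b ∈ Submodule.span K (v '' (C : Set ℕ)) := by
    apply hker
    rw [map_add, map_smul, map_smul, hrel]
  obtain ⟨g, hg⟩ := mem_span_image_finset v C hmem
  set A : Finset ℕ := insert a (insert b C) with hA
  have haA : a ∈ A := by simp [hA]
  have hbA : b ∈ A := by simp [hA]
  set G : ℕ → K := fun m => if m = a then c₁ else if m = b then c₂ else -g m with hG
  have hsum : ∑ x : A, G x.1 • v x.1 = 0 := by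
    rw [Finset.sum_coe_sort A (fun m => G m • v m)]
    have hanotin : a ∉ insert b C := by
      simp only [Finset.mem_insert]; push_neg; exact ⟨hab, ha⟩
    rw [hA, Finset.sum_insert hanotin, Finset.sum_insert hb]
    have h1 : G a = c₁ := by simp [hG]
    have h2 : G b = c₂ := by simp [hG, Ne.symm hab]
    have h3 : ∑ m ∈ C, G m • v m = -(c₁ • v a + c₂ • v b) := by
      rw [← hg, ← Finset.sum_neg_distrib]
      apply Finset.sum_congr rfl
      intro m hm
      have hma : m ≠ a := by rintro rfl; exact ha hm
      have hmb : m ≠ b := by rintro rfl; exact hb hm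
      simp [hG, hma, hmb]
    rw [h1, h2, h3]
    abel
  have hall := Fintype.linearIndependent_iff.mp h (fun x => G x.1) hsum
  constructor
  · have := hall ⟨a, haA⟩; simpa [hG] using this
  · have := hall ⟨b, hbA⟩; simpa [hG, Ne.symm hab] using this

lemma dep_quot {K V Q : Type} [Field K] [AddCommGroup V] [Module K V]
    [AddCommGroup Q] [Module K Q]
    (v : ℕ → V) (C : Finset ℕ) (a b c : ℕ) (ha : a ∉ C) (hb : b ∉ C) (hc : c ∉ C)
    (hab : a ≠ b) (hca : c ≠ a) (hcb : c ≠ b)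
    (h : LinearIndependent K (fun x : (insert a (insert b C) : Finset ℕ) => v x.1))
    (hdep : ¬ LinearIndependent K
      (fun x : (insert c (insert a (insert b C)) : Finset ℕ) => v x.1))
    (π : V →ₗ[K] Q) (hπC : ∀ m ∈ C, π (v m) = 0) :
    ∃ c₁ c₂ : K, π (v c) = c₁ • π (v a) + c₂ • π (v b) := by
  set A : Finset ℕ := insert a (insert b C) with hA
  set A' : Finset ℕ := insert c A with hA'
  have hcA : c ∉ A := by
    simp only [hA, Finset.mem_insert]; push_neg; exact ⟨hca, hcb, hc⟩
  have hanotin : a ∉ insert b C := by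
    simp only [Finset.mem_insert]; push_neg; exact ⟨hab, ha⟩
  obtain ⟨g, hg, i0, hi0⟩ := Fintype.not_linearIndependent_iff.mp hdep
  set gn : ℕ → K := fun m => if hm : m ∈ A' then g ⟨m, hm⟩ else 0 with hgn
  have hgneq : ∀ x : A', g x = gn x.1 := by
    intro x; simp [hgn, x.2]
  have hsumA' : ∑ m ∈ A', gn m • v m = 0 := by
    rw [← Finset.sum_coe_sort A' (fun m => gn m • v m), ← hg]
    exact Finset.sum_congr rfl (fun x _ => by rw [hgneq x])
  have hsum : gn c • v c + (gn a • v a + (gn b • v b + ∑ m ∈ C, gn m • v m)) = 0 := by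
    have h1 := hsumA'
    rw [hA', Finset.sum_insert hcA, hA, Finset.sum_insert hanotin, Finset.sum_insert hb] at h1
    exact h1
  have hgc : gn c ≠ 0 := by
    intro h0
    have hsumA : ∑ x : A, gn x.1 • v x.1 = 0 := by
      rw [Finset.sum_coe_sort A (fun m => gn m • v m)]
      have h2 := hsum
      rw [h0, zero_smul, zero_add] at h2
      rw [hA, Finset.sum_insert hanotin, Finset.sum_insert hb]
      exact h2
    have hall := Fintype.linearIndependent_iff.mp h (fun x => gn x.1) hsumA
    apply hi0
    rw [hgneq i0]
    rcases Finset.mem_insert.mp (show (i0 : ℕ) ∈ insert c A from i0.2) with h1 | h1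
    · rw [h1]; exact h0
    · exact hall ⟨i0.1, h1⟩
  have hq0 := congrArg π hsum
  simp only [map_add, map_smul, map_sum, map_zero] at hq0
  rw [Finset.sum_eq_zero (fun m hm => by rw [hπC m hm, smul_zero]), add_zero] at hq0
  have key : gn c • π (v c) = (-gn a) • π (v a) + (-gn b) • π (v b) := by
    rw [neg_smul, neg_smul, ← neg_add, eq_neg_iff_add_eq_zero]
    exact hq0
  refine ⟨(gn c)⁻¹ * -gn a, (gn c)⁻¹ * -gn b, ?_⟩
  have h2 := congrArg (fun z => (gn c)⁻¹ • z) key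
  simp only [smul_add, smul_smul, inv_mul_cancel₀ hgc, one_smul] at h2
  exact h2

theorem catalan_not_representable (n q : ℕ) (hn : 3 ≤ n) (hq : IsPrimePow q)
    (hqn : q ≤ n - 2) (K : Type) [Field K] [Fintype K] (hK : Fintype.card K = q) :
    ¬ ∃ (V : Type) (_ : AddCommGroup V) (_ : Module K V) (v : ℕ → V),
        ∀ A : Finset ℕ, A ⊆ Finset.Icc 1 (2 * n) →
          ((∃ B : Finset ℕ, IsDyck n B ∧ A ⊆ B) ↔
            LinearIndependent K (fun x : A => v x.1)) := by
  rintro ⟨V, _, _, v, h⟩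
  classical
  have hq2 : 2 ≤ q := hq.two_le
  set C : Finset ℕ := Finset.Icc 1 (n-2) with hC
  have hCmem : ∀ m, m ∈ C ↔ 1 ≤ m ∧ m ≤ n - 2 := by intro m; simp [hC]
  -- independence of pairs over C
  have hindep : ∀ a b : ℕ, n - 1 ≤ a → a < b → b ≤ 2*n - 2 →
      LinearIndependent K (fun x : (insert a (insert b C) : Finset ℕ) => v x.1) := by
    intro a b ha hab hb
    have hsub : (insert a (insert b C) : Finset ℕ) ⊆ Finset.Icc 1 (2*n) := by
      intro x hx
      simp only [Finset.mem_insert, hCmem x, Finset.mem_Icc] at hx ⊢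
      rcases hx with rfl | rfl | hx <;> omega
    exact (h _ hsub).mp ⟨_, isDyck_aux n a b hn ha hab hb, Finset.Subset.refl _⟩
  -- dependence of triples over C
  have hdep : ∀ a b c : ℕ, n - 1 ≤ a → a < b → b < c → c ≤ 2*n - 2 →
      ¬ LinearIndependent K
        (fun x : (insert c (insert a (insert b C)) : Finset ℕ) => v x.1) := by
    intro a b c ha hab hbc hc hli
    have hsub : (insert c (insert a (insert b C)) : Finset ℕ) ⊆ Finset.Icc 1 (2*n) := by
      intro x hx
      simp only [Finset.mem_insert, hCmem x, Finset.mem_Icc] at hx ⊢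
      rcases hx with rfl | rfl | rfl | hx <;> omega
    obtain ⟨B, hB, hsubB⟩ := (h _ hsub).mpr hli
    have hcardB : B.card = n := hB.2.1
    have hcard : (insert c (insert a (insert b C)) : Finset ℕ).card = n + 1 := by
      rw [Finset.card_insert_of_notMem (by simp only [Finset.mem_insert, hCmem]; omega),
        Finset.card_insert_of_notMem (by simp only [Finset.mem_insert, hCmem]; omega),
        Finset.card_insert_of_notMem (by simp only [hCmem]; omega), hC, Nat.card_Icc]
      omega
    have := Finset.card_le_card hsubB
    omega
  -- pass to quotient
  set W : Submodule K V := Submodule.span K (v '' (C : Set ℕ)) with hW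
  set π : V →ₗ[K] V ⧸ W := W.mkQ with hπ
  have hker : ∀ x, π x = 0 → x ∈ Submodule.span K (v '' (C : Set ℕ)) := by
    intro x hx
    rw [← hW]
    rw [← Submodule.ker_mkQ W]
    exact hx
  have hπC : ∀ m ∈ C, π (v m) = 0 := by
    intro m hm
    rw [hπ, Submodule.mkQ_apply]
    exact (Submodule.Quotient.mk_eq_zero W).mpr (Submodule.subset_span ⟨m, hm, rfl⟩)
  set u : ℕ → V ⧸ W := fun m => π (v m) with hu
  have hnotC : ∀ m, n - 1 ≤ m → m ∉ C := by intro m hm; rw [hCmem]; omega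
  -- pairwise independence at quotient level
  have hpair : ∀ a b : ℕ, n - 1 ≤ a → a < b → b ≤ 2*n - 2 →
      ∀ c₁ c₂ : K, c₁ • u a + c₂ • u b = 0 → c₁ = 0 ∧ c₂ = 0 := by
    intro a b ha hab hb c₁ c₂ hrel
    exact pair_quot v C a b (hnotC a ha) (hnotC b (by omega)) (by omega)
      (hindep a b ha hab hb) π hker c₁ c₂ hrel
  -- span of any third element
  have hspan : ∀ c : ℕ, n + 1 ≤ c → c ≤ 2*n - 2 →
      ∃ c₁ c₂ : K, u c = c₁ • u (n-1) + c₂ • u n := by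
    intro c hc1 hc2
    exact dep_quot v C (n-1) n c (hnotC _ le_rfl) (hnotC _ (by omega)) (hnotC _ (by omega))
      (by omega) (by omega) (by omega)
      (hindep (n-1) n le_rfl (by omega) (by omega))
      (hdep (n-1) n c le_rfl (by omega) (by omega) hc2)
      π hπC
  -- coordinates in K × K
  have hw : ∀ i : Fin (q+2), ∃ p : K × K, u (n - 1 + i.1) = p.1 • u (n-1) + p.2 • u n := by
    intro i
    rcases Nat.lt_or_ge i.1 2 with h2 | h2
    · interval_cases hi : i.1
      · exact ⟨(1, 0), by simp⟩
      · refine ⟨(0, 1), ?_⟩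
        have : n - 1 + 1 = n := by omega
        rw [this]; simp
    · have hb1 : n + 1 ≤ n - 1 + i.1 := by omega
      have hb2 : n - 1 + i.1 ≤ 2*n - 2 := by
        have := i.2; omega
      obtain ⟨c₁, c₂, hcc⟩ := hspan (n - 1 + i.1) hb1 hb2
      exact ⟨(c₁, c₂), hcc⟩
  choose w hwp using hw
  -- pairwise independence of the coordinate vectors
  have hwind : ∀ i j : Fin (q+2), i ≠ j → ∀ α β : K, α • w i + β • w j = 0 →
      α = 0 ∧ β = 0 := by
    have H : ∀ i j : Fin (q+2), i.1 < j.1 → ∀ α β : K, α • w i + β • w j = 0 →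
        α = 0 ∧ β = 0 := by
      intro i j hij α β hrel
      have h1 : α * (w i).1 + β * (w j).1 = 0 := by
        have := congrArg Prod.fst hrel; simpa using this
      have h2 : α * (w i).2 + β * (w j).2 = 0 := by
        have := congrArg Prod.snd hrel; simpa using this
      have hrel2 : α • u (n - 1 + i.1) + β • u (n - 1 + j.1) = 0 := by
        rw [hwp i, hwp j]
        have expand : α • ((w i).1 • u (n-1) + (w i).2 • u n)
            + β • ((w j).1 • u (n-1) + (w j).2 • u n)
            = (α * (w i).1 + β * (w j).1) • u (n-1)
              + (α * (w i).2 + β * (w j).2) • u n := by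
          module
        rw [expand, h1, h2, zero_smul, zero_smul, add_zero]
      have hj2 : j.1 ≤ q + 1 := by have := j.2; omega
      exact hpair (n - 1 + i.1) (n - 1 + j.1) (by omega) (by omega) (by omega) α β hrel2
    intro i j hij α β hrel
    have hij' : i.1 ≠ j.1 := fun hh => hij (Fin.ext hh)
    rcases lt_or_gt_of_ne hij' with hlt | hgt
    · exact H i j hlt α β hrel
    · have := H j i hgt β α (by rw [add_comm]; exact hrel)
      exact ⟨this.2, this.1⟩
  -- counting argument
  have hne : ∀ (i : Fin (q+2)) (c : K), c ≠ 0 → c • w i ≠ 0 := by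
    intro i c hc h0
    set j : Fin (q+2) := if i = ⟨0, by omega⟩ then ⟨1, by omega⟩ else ⟨0, by omega⟩ with hj
    have hij : i ≠ j := by
      by_cases hcase : i = ⟨0, by omega⟩
      · rw [hj, if_pos hcase, hcase]
        intro hcontra
        have := Fin.val_eq_of_eq hcontra
        simp at this
      · rw [hj, if_neg hcase]
        exact hcase
    have := hwind i j hij c 0 (by rw [zero_smul, add_zero]; exact h0)
    exact hc this.1
  set G : (Fin (q+2) × Kˣ) ⊕ Unit → K × K :=
    Sum.elim (fun p => (p.2 : K) • w p.1) (fun _ => 0) with hG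
  have Ginj : Function.Injective G := by
    rintro (⟨i, c⟩ | ⟨⟩) (⟨j, d⟩ | ⟨⟩) hEq
    · simp only [hG, Sum.elim_inl] at hEq
      by_cases hij : i = j
      · subst hij
        have hcd : ((c : K) - d) • w i = 0 := by rw [sub_smul, hEq, sub_self]
        have hcd0 : (c : K) - (d : K) = 0 := by
          by_contra hne0; exact hne i _ hne0 hcd
        have hcd1 : (c : K) = d := sub_eq_zero.mp hcd0
        rw [show c = d from Units.ext hcd1]
      · exfalso
        have hrel : (c : K) • w i + (-(d : K)) • w j = 0 := by
          rw [neg_smul, hEq, add_neg_cancel]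
        exact c.ne_zero (hwind i j hij _ _ hrel).1
    · exfalso
      simp only [hG, Sum.elim_inl, Sum.elim_inr] at hEq
      exact hne i _ c.ne_zero hEq
    · exfalso
      simp only [hG, Sum.elim_inl, Sum.elim_inr] at hEq
      exact hne j _ d.ne_zero hEq.symm
    · rfl
  have hcard := Fintype.card_le_of_injective G Ginj
  rw [Fintype.card_sum, Fintype.card_prod, Fintype.card_fin, Fintype.card_prod,
    Fintype.card_units, hK] at hcard
  have hcu : Fintype.card Unit = 1 := Fintype.card_unit
  rw [hcu] at hcard
  -- (q+2)*(q-1) + 1 ≤ q*q is impossible for q ≥ 2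
  obtain ⟨r, rfl⟩ : ∃ r, q = r + 2 := ⟨q - 2, by omega⟩
  have e1 : (r + 2 + 2) * (r + 2 - 1) = r*r + 5*r + 4 := by
    have hr : r + 2 - 1 = r + 1 := by omega
    rw [hr]; ring
  have e2 : (r + 2) * (r + 2) = r*r + 4*r + 4 := by ring
  rw [e1, e2] at hcard
  omega
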